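/- Let ω = e^{2πi/3} and let z = (z₁, z₂, z₃) ∈ ℂ³ be a unit vector. Let z⁽¹⁾ = (z₁, ω z₂, ω² z₃). Then |⟨z, z⁽¹⁾⟩|² = 1/4 if and only if |z₁|⁴ + |z₂|⁴ + |z₃|⁴ = 1/2, where ⟨w, v⟩ = Σᵢ conj(wᵢ)·vᵢ. -/

import Mathlib

open Complex

theorem stmt_5 (ω : ℂ) (hω : ω = Complex.exp (2 * Real.pi * Complex.I / 3))
    (z : Fin 3 → ℂ)
    (hz : ‖z 0‖ ^ 2 + ‖z 1‖ ^ 2 + ‖z 2‖ ^ 2 = 1) :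
    ‖(starRingEnd ℂ) (z 0) * (z 0) + (starRingEnd ℂ) (z 1) * (ω * z 1) +
        (starRingEnd ℂ) (z 2) * (ω ^ 2 * z 2)‖ ^ 2 = 1 / 4 ↔
      ‖z 0‖ ^ 4 + ‖z 1‖ ^ 4 + ‖z 2‖ ^ 4 = 1 / 2 := by
  have hωre : ω.re = -(1/2) := by
    rw [hω]
    have : (2 * (Real.pi:ℂ) * Complex.I / 3) = (↑(2 * Real.pi / 3) : ℝ) * Complex.I := by
      push_cast; ring
    rw [this, Complex.exp_ofReal_mul_I_re]
    have : (2 * Real.pi / 3) = Real.pi - Real.pi / 3 := by ring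
    rw [this, Real.cos_pi_sub, Real.cos_pi_div_three]
  have hωim : ω.im = Real.sqrt 3 / 2 := by
    rw [hω]
    have : (2 * (Real.pi:ℂ) * Complex.I / 3) = (↑(2 * Real.pi / 3) : ℝ) * Complex.I := by
      push_cast; ring
    rw [this, Complex.exp_ofReal_mul_I_im]
    have : (2 * Real.pi / 3) = Real.pi - Real.pi / 3 := by ring
    rw [this, Real.sin_pi_sub, Real.sin_pi_div_three]
  set a := ‖z 0‖ ^ 2 with ha
  set b := ‖z 1‖ ^ 2 with hb
  set c := ‖z 2‖ ^ 2 with hc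
  have h0 : (starRingEnd ℂ) (z 0) * (z 0) = (a : ℂ) := by
    rw [ha]; rw [← Complex.normSq_eq_norm_sq]; push_cast
    rw [← Complex.normSq_eq_conj_mul_self]
  have h1 : (starRingEnd ℂ) (z 1) * (ω * z 1) = (b : ℂ) * ω := by
    rw [hb]; rw [← Complex.normSq_eq_norm_sq]; push_cast
    linear_combination -ω * Complex.normSq_eq_conj_mul_self (z := z 1)
  have h2 : (starRingEnd ℂ) (z 2) * (ω ^ 2 * z 2) = (c : ℂ) * ω ^ 2 := by
    rw [hc]; rw [← Complex.normSq_eq_norm_sq]; push_cast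
    linear_combination -ω ^ 2 * Complex.normSq_eq_conj_mul_self (z := z 2)
  rw [h0, h1, h2]
  have hsq : ‖(a : ℂ) + (b : ℂ) * ω + (c : ℂ) * ω ^ 2‖ ^ 2
      = a ^ 2 + b ^ 2 + c ^ 2 - a * b - b * c - a * c := by
    have h3 : Real.sqrt 3 ^ 2 = 3 := Real.sq_sqrt (by norm_num)
    have hω2re : (ω ^ 2).re = -(1/2) := by
      rw [pow_two, Complex.mul_re, hωre, hωim]
      linear_combination (-(1/4)) * h3
    have hω2im : (ω ^ 2).im = -(Real.sqrt 3 / 2) := by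
      rw [pow_two, Complex.mul_im, hωre, hωim]; ring
    rw [Complex.sq_norm, Complex.normSq_apply]
    simp only [Complex.add_re, Complex.add_im, Complex.mul_re, Complex.mul_im,
      Complex.ofReal_re, Complex.ofReal_im, hωre, hωim, hω2re, hω2im]
    linear_combination ((b - c) ^ 2 / 4) * h3
  rw [hsq]
  have ha4 : ‖z 0‖ ^ 4 = a ^ 2 := by rw [ha]; ring
  have hb4 : ‖z 1‖ ^ 4 = b ^ 2 := by rw [hb]; ring
  have hc4 : ‖z 2‖ ^ 4 = c ^ 2 := by rw [hc]; ring
  rw [ha4, hb4, hc4]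
  constructor <;> intro h <;> nlinarith [hz, h]
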